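/- Let G and H be isoclinic finite groups. Then for all n ≥ 0, α_{G,n}/|G|^n = α_{H,n}/|H|^n, where α_{G,n} is the number of simultaneous conjugacy classes of n-tuples; equivalently A_G(t/|G|) = A_H(t/|H|). -/

import Mathlib

/-- Number of orbits of `G` acting on `G^n` by simultaneous conjugation. -/
noncomputable def alphaOrbits (G : Type*) [Group G] (n : ℕ) : ℕ :=
  Nat.card (Quotient (MulAction.orbitRel (ConjAct G) (Fin n → G)))

/-- Pairwise commuting `n`-tuples as a sub-`MulAction` of the conjugation action. -/
def commTuples (G : Type*) [Group G] (n : ℕ) : SubMulAction (ConjAct G) (Fin n → G) where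
  carrier := {x | ∀ i j, Commute (x i) (x j)}
  smul_mem' := by
    intro g x hx i j
    have h := (hx i j).map (MulAut.conj (ConjAct.ofConjAct g)).toMonoidHom
    simpa [ConjAct.smul_def, MulAut.conj_apply, mul_assoc] using h

/-- Number of orbits of `G` acting on pairwise-commuting `n`-tuples by
simultaneous conjugation. -/
noncomputable def betaOrbits (G : Type*) [Group G] (n : ℕ) : ℕ :=
  Nat.card (Quotient (MulAction.orbitRel (ConjAct G) (commTuples G n)))

open scoped commutatorElement

/-- Isoclinism of groups: compatible isomorphisms of central quotients and commutator
subgroups intertwining the commutator maps. -/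
def Isoclinic (G H : Type*) [Group G] [Group H] : Prop :=
  ∃ (θ : (G ⧸ Subgroup.center G) ≃* (H ⧸ Subgroup.center H))
    (φ : commutator G ≃* commutator H),
    ∀ (g₁ g₂ : G) (h₁ h₂ : H),
      θ (QuotientGroup.mk g₁) = QuotientGroup.mk h₁ →
      θ (QuotientGroup.mk g₂) = QuotientGroup.mk h₂ →
      (φ ⟨⁅g₁, g₂⁆,
          Subgroup.commutator_mem_commutator (Subgroup.mem_top g₁)
            (Subgroup.mem_top g₂)⟩ : H) = ⁅h₁, h₂⁆

section IsoclinicProof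
open Subgroup


section helpers

variable {G : Type*} [Group G]

lemma comm_left_center (g h z : G) (hz : z ∈ center G) : ⁅g * z, h⁆ = ⁅g, h⁆ := by
  have hz' := Subgroup.mem_center_iff.mp hz
  simp only [commutatorElement_def, mul_inv_rev]
  calc g * z * h * (z⁻¹ * g⁻¹) * h⁻¹ = g * (z * h) * z⁻¹ * g⁻¹ * h⁻¹ := by group
    _ = g * (h * z) * z⁻¹ * g⁻¹ * h⁻¹ := by rw [← hz' h]
    _ = g * h * g⁻¹ * h⁻¹ := by group

lemma comm_right_center (g h z : G) (hz : z ∈ center G) : ⁅g, h * z⁆ = ⁅g, h⁆ := by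
  have hz' := Subgroup.mem_center_iff.mp hz
  simp only [commutatorElement_def, mul_inv_rev]
  calc g * (h * z) * g⁻¹ * (z⁻¹ * h⁻¹) = g * h * (z * g⁻¹) * z⁻¹ * h⁻¹ := by group
    _ = g * h * (g⁻¹ * z) * z⁻¹ * h⁻¹ := by rw [hz' g⁻¹]
    _ = g * h * g⁻¹ * h⁻¹ := by group

lemma comm_well_def {g₁ g₂ g₁' g₂' : G}
    (h1 : (QuotientGroup.mk g₁ : G ⧸ center G) = QuotientGroup.mk g₁')
    (h2 : (QuotientGroup.mk g₂ : G ⧸ center G) = QuotientGroup.mk g₂') :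
    ⁅g₁, g₂⁆ = ⁅g₁', g₂'⁆ := by
  rw [QuotientGroup.eq] at h1 h2
  have e1 : g₁' = g₁ * (g₁⁻¹ * g₁') := by group
  have e2 : g₂' = g₂ * (g₂⁻¹ * g₂') := by group
  rw [e1, e2, comm_left_center _ _ _ h1, comm_right_center _ _ _ h2]

/-- commuting relation on the central quotient -/
def Pc (a b : G ⧸ center G) : Prop :=
  ∃ g₁ g₂ : G, QuotientGroup.mk g₁ = a ∧ QuotientGroup.mk g₂ = b ∧ ⁅g₁, g₂⁆ = 1

lemma Pc_iff (g₁ g₂ : G) :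
    Pc (QuotientGroup.mk g₁ : G ⧸ center G) (QuotientGroup.mk g₂) ↔ ⁅g₁, g₂⁆ = 1 := by
  constructor
  · rintro ⟨x, y, hx, hy, hxy⟩
    rw [← comm_well_def hx hy]
    exact hxy
  · intro h
    exact ⟨g₁, g₂, rfl, rfl, h⟩

/-- number of cosets commuting with `a` -/
noncomputable def Ncomm (a : G ⧸ center G) : ℕ :=
  Nat.card {b : G ⧸ center G // Pc b a}

end helpers

section burnside

variable (G : Type*) [Group G] [Fintype G]

lemma card_fixedBy_conj (n : ℕ) (g : ConjAct G) :
    Nat.card (MulAction.fixedBy (Fin n → G) g) =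
      Nat.card {x : G // ConjAct.ofConjAct g * x = x * ConjAct.ofConjAct g} ^ n := by
  have e : MulAction.fixedBy (Fin n → G) g ≃
      (Fin n → {x : G // ConjAct.ofConjAct g * x = x * ConjAct.ofConjAct g}) := by
    refine ⟨fun x i => ⟨x.1 i, ?_⟩, fun f => ⟨fun i => (f i).1, ?_⟩, ?_, ?_⟩
    · have hx : g • x.1 = x.1 := x.2
      have := congrFun hx i
      rw [Pi.smul_apply, ConjAct.smul_def] at this
      calc ConjAct.ofConjAct g * x.1 i
          = ConjAct.ofConjAct g * x.1 i * (ConjAct.ofConjAct g)⁻¹ * ConjAct.ofConjAct g := by group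
        _ = x.1 i * ConjAct.ofConjAct g := by rw [this]
    · show g • _ = _
      funext i
      rw [Pi.smul_apply, ConjAct.smul_def]
      have := (f i).2
      calc ConjAct.ofConjAct g * (f i).1 * (ConjAct.ofConjAct g)⁻¹
          = (f i).1 * ConjAct.ofConjAct g * (ConjAct.ofConjAct g)⁻¹ := by rw [this]
        _ = (f i).1 := by group
    · intro x; rfl
    · intro f; rfl
  rw [Nat.card_congr e, Nat.card_fun]
  simp

lemma burnside_alpha (n : ℕ) :
    alphaOrbits G n * Fintype.card G =
      ∑ g : G, Nat.card {x : G // g * x = x * g} ^ n := by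
  classical
  letI : ∀ a : ConjAct G, Fintype (MulAction.fixedBy (Fin n → G) a) := fun a =>
    Fintype.ofFinite _
  letI : Fintype (Quotient (MulAction.orbitRel (ConjAct G) (Fin n → G))) := Fintype.ofFinite _
  have hb := MulAction.sum_card_fixedBy_eq_card_orbits_mul_card_group (ConjAct G) (Fin n → G)
  have hcard : Fintype.card (ConjAct G) = Fintype.card G := rfl
  have h1 : alphaOrbits G n =
      Fintype.card (Quotient (MulAction.orbitRel (ConjAct G) (Fin n → G))) :=
    Nat.card_eq_fintype_card
  rw [h1, ← hcard, ← hb]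
  rw [← Equiv.sum_comp ConjAct.toConjAct.toEquiv
    (fun a : ConjAct G => Fintype.card (MulAction.fixedBy (Fin n → G) a))]
  refine Finset.sum_congr rfl fun g _ => ?_
  rw [← Nat.card_eq_fintype_card, card_fixedBy_conj]
  congr 2

end burnside


section counting

variable {G : Type*} [Group G] [Fintype G]

lemma card_conj_subtype (g : G) :
    Nat.card {x : G // g * x = x * g} =
      Nat.card (center G) * Ncomm (QuotientGroup.mk g : G ⧸ center G) := by
  have e0 : {x : G // g * x = x * g} ≃
      (QuotientGroup.mk ⁻¹' {b : G ⧸ center G | Pc b (QuotientGroup.mk g)}) := by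
    refine Equiv.subtypeEquivRight fun x => ?_
    show g * x = x * g ↔ Pc (QuotientGroup.mk x : G ⧸ center G) (QuotientGroup.mk g)
    rw [Pc_iff, commutatorElement_eq_one_iff_commute]
    exact ⟨fun h => h.symm, fun h => h.symm⟩
  rw [Nat.card_congr e0,
    Nat.card_congr (QuotientGroup.preimageMkEquivSubgroupProdSet (center G) _),
    Nat.card_prod]
  rfl

lemma fiber_card (a : G ⧸ center G) :
    Nat.card {g : G // (QuotientGroup.mk g : G ⧸ center G) = a} = Nat.card (center G) := by
  have e1 : {g : G // (QuotientGroup.mk g : G ⧸ center G) = a} ≃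
      (QuotientGroup.mk ⁻¹' ({a} : Set (G ⧸ center G))) :=
    Equiv.subtypeEquivRight (by simp)
  rw [Nat.card_congr e1,
    Nat.card_congr (QuotientGroup.preimageMkEquivSubgroupProdSet (center G) _),
    Nat.card_prod]
  simp

lemma sum_comp_mk [Fintype (G ⧸ center G)] (f : G ⧸ center G → ℕ) :
    ∑ g : G, f (QuotientGroup.mk g) = Nat.card (center G) * ∑ a : G ⧸ center G, f a := by
  classical
  rw [Finset.mul_sum]
  rw [← Finset.sum_fiberwise_of_maps_to
    (fun g _ => Finset.mem_univ ((QuotientGroup.mk g : G ⧸ center G)))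
    (fun g => f (QuotientGroup.mk g))]
  refine Finset.sum_congr rfl fun a _ => ?_
  have hc : ∀ g ∈ Finset.univ.filter (fun g : G => (QuotientGroup.mk g : G ⧸ center G) = a),
      f (QuotientGroup.mk g) = f a := fun g hg => by rw [(Finset.mem_filter.mp hg).2]
  rw [Finset.sum_congr rfl hc, Finset.sum_const, smul_eq_mul]
  congr 1
  rw [← fiber_card a, Nat.card_eq_fintype_card, Fintype.card_subtype]

end counting

lemma alpha_div (G : Type*) [Group G] [Fintype G] [Fintype (G ⧸ center G)] (n : ℕ) :
    (alphaOrbits G n : ℚ) / (Nat.card G : ℚ) ^ n =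
      (∑ a : G ⧸ center G, (Ncomm a : ℚ) ^ n) /
        (Nat.card (G ⧸ center G) : ℚ) ^ (n + 1) := by
  classical
  have hb := burnside_alpha G n
  have hstep : ∑ g : G, Nat.card {x : G // g * x = x * g} ^ n =
      Nat.card (center G) ^ n *
        (Nat.card (center G) * ∑ a : G ⧸ center G, Ncomm a ^ n) := by
    rw [← sum_comp_mk (fun a => Ncomm a ^ n), Finset.mul_sum]
    refine Finset.sum_congr rfl fun g _ => ?_
    rw [card_conj_subtype, mul_pow]
  rw [hstep] at hb
  have hG : Nat.card G = Nat.card (G ⧸ center G) * Nat.card (center G) :=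
    Subgroup.card_eq_card_quotient_mul_card_subgroup (center G)
  -- pass to ℚ
  set z : ℚ := (Nat.card (center G) : ℚ) with hz
  set q : ℚ := (Nat.card (G ⧸ center G) : ℚ) with hq
  set S : ℚ := ∑ a : G ⧸ center G, (Ncomm a : ℚ) ^ n with hS
  have hz0 : z ≠ 0 := by
    rw [hz]
    exact_mod_cast (Nat.card_pos (α := center G)).ne'
  have hq0 : q ≠ 0 := by
    rw [hq]
    exact_mod_cast (Nat.card_pos (α := G ⧸ center G)).ne'
  have hbQ : (alphaOrbits G n : ℚ) * (q * z) = z ^ n * (z * S) := by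
    have := congrArg (fun m : ℕ => (m : ℚ)) hb
    push_cast at this
    rw [Nat.card_eq_fintype_card] at hG
    calc (alphaOrbits G n : ℚ) * (q * z)
        = (alphaOrbits G n : ℚ) * (Fintype.card G : ℚ) := by
          rw [hG]; push_cast; ring
      _ = z ^ n * (z * S) := by rw [this, hS]
  have key : (alphaOrbits G n : ℚ) * q = z ^ n * S := by
    have h2 : ((alphaOrbits G n : ℚ) * q) * z = (z ^ n * S) * z := by
      calc ((alphaOrbits G n : ℚ) * q) * z = (alphaOrbits G n : ℚ) * (q * z) := by ring
        _ = z ^ n * (z * S) := hbQ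
        _ = (z ^ n * S) * z := by ring
    exact mul_right_cancel₀ hz0 h2
  have hGQ : (Nat.card G : ℚ) = q * z := by
    rw [hG]; push_cast; ring
  rw [hGQ]
  rw [div_eq_div_iff (by positivity) (by positivity)]
  calc (alphaOrbits G n : ℚ) * q ^ (n + 1)
      = ((alphaOrbits G n : ℚ) * q) * q ^ n := by ring
    _ = (z ^ n * S) * q ^ n := by rw [key]
    _ = S * (q * z) ^ n := by ring

section transfer

variable {G H : Type*} [Group G] [Group H]
variable (θ : (G ⧸ Subgroup.center G) ≃* (H ⧸ Subgroup.center H))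
variable (φ : commutator G ≃* commutator H)
variable (hc : ∀ (g₁ g₂ : G) (h₁ h₂ : H),
      θ (QuotientGroup.mk g₁) = QuotientGroup.mk h₁ →
      θ (QuotientGroup.mk g₂) = QuotientGroup.mk h₂ →
      (φ ⟨⁅g₁, g₂⁆,
          Subgroup.commutator_mem_commutator (Subgroup.mem_top g₁)
            (Subgroup.mem_top g₂)⟩ : H) = ⁅h₁, h₂⁆)

include hc in
lemma Pc_map (a b : G ⧸ center G) : Pc a b ↔ Pc (θ a) (θ b) := by
  obtain ⟨g, rfl⟩ := QuotientGroup.mk_surjective a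
  obtain ⟨x, rfl⟩ := QuotientGroup.mk_surjective b
  obtain ⟨h, hh⟩ := QuotientGroup.mk_surjective (θ (QuotientGroup.mk g))
  obtain ⟨y, hy⟩ := QuotientGroup.mk_surjective (θ (QuotientGroup.mk x))
  rw [← hh, ← hy, Pc_iff, Pc_iff]
  have key := hc g x h y hh.symm hy.symm
  constructor
  · intro h1
    have h2 : (⟨⁅g, x⁆, Subgroup.commutator_mem_commutator (Subgroup.mem_top g)
        (Subgroup.mem_top x)⟩ : commutator G) = 1 := Subtype.ext h1
    rw [h2, map_one] at key
    exact key.symm.trans (OneMemClass.coe_one _)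
  · intro h1
    have h2 : φ ⟨⁅g, x⁆, Subgroup.commutator_mem_commutator (Subgroup.mem_top g)
        (Subgroup.mem_top x)⟩ = 1 := OneMemClass.coe_eq_one.mp (key.trans h1)
    have h3 := φ.injective (h2.trans (map_one φ).symm)
    exact (congrArg Subtype.val h3).trans (OneMemClass.coe_one _)

include hc in
lemma Ncomm_map (a : G ⧸ center G) : Ncomm a = Ncomm (θ a) :=
  Nat.card_congr (Equiv.subtypeEquiv θ.toEquiv (fun b => Pc_map θ φ hc b a))

end transfer


end IsoclinicProof

open Subgroup in
/-- Isoclinic finite groups have proportional orbit-count sequences: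
`α_{G,n}/|G|^n = α_{H,n}/|H|^n`. -/
theorem isoclinic_alpha_normalized (G H : Type*) [Group G] [Fintype G]
    [Group H] [Fintype H] (h : Isoclinic G H) (n : ℕ) :
    (alphaOrbits G n : ℚ) / (Nat.card G : ℚ) ^ n =
      (alphaOrbits H n : ℚ) / (Nat.card H : ℚ) ^ n := by
  classical
  obtain ⟨θ, φ, hc⟩ := h
  letI : Fintype (G ⧸ center G) := Fintype.ofFinite _
  letI : Fintype (H ⧸ center H) := Fintype.ofFinite _
  rw [alpha_div G n, alpha_div H n]
  have hq : (Nat.card (G ⧸ center G)) = (Nat.card (H ⧸ center H)) :=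
    Nat.card_congr θ.toEquiv
  have hS : ∑ a : G ⧸ center G, (Ncomm a : ℚ) ^ n =
      ∑ a : H ⧸ center H, (Ncomm a : ℚ) ^ n := by
    rw [← Equiv.sum_comp θ.toEquiv (fun a : H ⧸ center H => (Ncomm a : ℚ) ^ n)]
    exact Finset.sum_congr rfl fun a _ => by rw [Ncomm_map θ φ hc a]; rfl
  rw [hq, hS]
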